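/- Suppose the weighted undirected graph a on n nodes is connected. A tuple (X*, Y*, Z*) is an optimal solution of problem (RRR-opt) if and only if there exist Λ¹_i* ∈ ℝ^{r×q} and Λ²_i* ∈ ℝ^{r×q} (i = 1,…,n) such that (X*, Y*, Z*, Λ¹*, Λ²*) is an equilibrium of algorithm (RRR-alg), i.e., all the right-hand sides of (RRR-alg) vanish at this point (with all derivative-feedback terms set to zero). -/
import Mathlib


open Matrix

/-- Squared Frobenius norm of a real matrix: `‖M‖_F² = tr (Mᵀ M)`. -/
noncomputable def frobSq {α β : Type*} [Fintype α] [Fintype β] (M : Matrix α β ℝ) : ℝ :=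
  Matrix.trace (Mᵀ * M)

/-- Frobenius inner product of real matrices: `⟨M,N⟩_F = tr (Mᵀ N)`. -/
noncomputable def frobInner {α β : Type*} [Fintype α] [Fintype β] (M N : Matrix α β ℝ) : ℝ :=
  Matrix.trace (Mᵀ * N)

/-- The weighted undirected graph with adjacency matrix `a` is connected: any two nodes are
joined by a path of adjacent nodes (nodes `u ≠ v` are adjacent iff `a u v > 0`). -/
def GraphConnected {n : ℕ} (a : Matrix (Fin n) (Fin n) ℝ) : Prop :=
  ∀ i j : Fin n, Relation.ReflTransGen (fun u v : Fin n => u ≠ v ∧ 0 < a u v) i j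

/-- Assemble a family of row blocks `M i ∈ ℝ^{d i × β}` into one matrix. -/
def blockRows {n : ℕ} {d : Fin n → ℕ} {β : Type*} (M : ∀ i, Matrix (Fin (d i)) β ℝ) :
    Matrix ((i : Fin n) × Fin (d i)) β ℝ :=
  Matrix.of fun s j => M s.1 s.2 j

/-- Assemble a family of column blocks `M i ∈ ℝ^{α × d i}` into one matrix. -/
def blockCols {n : ℕ} {d : Fin n → ℕ} {α : Type*} (M : ∀ i, Matrix α (Fin (d i)) ℝ) :
    Matrix α ((i : Fin n) × Fin (d i)) ℝ :=
  Matrix.of fun k s => M s.1 k s.2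

/-- The `i`-th row block of a matrix whose rows are partitioned according to `d`. -/
def rowBlk {n : ℕ} {d : Fin n → ℕ} {β : Type*}
    (Y : Matrix ((i : Fin n) × Fin (d i)) β ℝ) (i : Fin n) :
    Matrix (Fin (d i)) β ℝ :=
  Matrix.of fun k j => Y ⟨i, k⟩ j

/-- `[M]_R`: the matrix whose `i`-th row block is `M` and whose other row blocks are zero. -/
def embedRow {n : ℕ} {d : Fin n → ℕ} {β : Type*} (i : Fin n)
    (M : Matrix (Fin (d i)) β ℝ) :
    Matrix ((i' : Fin n) × Fin (d i')) β ℝ :=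
  Matrix.of fun s j => if h : s.1 = i then M (Fin.cast (congrArg d h) s.2) j else 0

/-- `[M]_C`: the matrix whose `i`-th column block is `M` and whose other column blocks are zero. -/
def embedCol {n : ℕ} {d : Fin n → ℕ} {α : Type*} (i : Fin n)
    (M : Matrix α (Fin (d i)) ℝ) :
    Matrix α ((i' : Fin n) × Fin (d i')) ℝ :=
  Matrix.of fun k s => if h : s.1 = i then M k (Fin.cast (congrArg d h) s.2) else 0

/-- Feasibility for problem (RRR-opt). -/
def RRRfeas {n r q : ℕ} {pdim : Fin n → ℕ}
    (a : Matrix (Fin n) (Fin n) ℝ)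
    (Bv : ∀ i, Matrix (Fin (pdim i)) (Fin q) ℝ)
    (Xl : ∀ i, Matrix (Fin r) (Fin (pdim i)) ℝ)
    (Y Z : Fin n → Matrix (Fin r) (Fin q) ℝ) : Prop :=
  (∀ i, (n : ℝ)⁻¹ • Y i - Xl i * Bv i + ∑ j, a i j • (Z i - Z j) = 0) ∧
  (∀ i j, Y i = Y j)

/-- Objective of problem (RRR-opt): `Σ_i ‖A_{vi} Y_i − F_{vi}‖_F²`. -/
noncomputable def RRRobj {n r q : ℕ} {mdim : Fin n → ℕ}
    (Av : ∀ i, Matrix (Fin (mdim i)) (Fin r) ℝ)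
    (Fv : ∀ i, Matrix (Fin (mdim i)) (Fin q) ℝ)
    (Y : Fin n → Matrix (Fin r) (Fin q) ℝ) : ℝ :=
  ∑ i, frobSq (Av i * Y i - Fv i)

/-- Right-hand side of the `X_{li}`-equation in algorithm (RRR-alg). -/
noncomputable def RRRrhsX {n r q : ℕ} {pdim : Fin n → ℕ}
    (Bv : ∀ i, Matrix (Fin (pdim i)) (Fin q) ℝ)
    (L1 : Fin n → Matrix (Fin r) (Fin q) ℝ) (i : Fin n) :
    Matrix (Fin r) (Fin (pdim i)) ℝ :=
  L1 i * (Bv i)ᵀ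

/-- Right-hand side of the `Y_i`-equation in algorithm (RRR-alg). -/
noncomputable def RRRrhsY {n r q : ℕ} {mdim : Fin n → ℕ}
    (a : Matrix (Fin n) (Fin n) ℝ)
    (Av : ∀ i, Matrix (Fin (mdim i)) (Fin r) ℝ)
    (Fv : ∀ i, Matrix (Fin (mdim i)) (Fin q) ℝ)
    (Y L1 L2 : Fin n → Matrix (Fin r) (Fin q) ℝ) (i : Fin n) :
    Matrix (Fin r) (Fin q) ℝ :=
  -((Av i)ᵀ * (Av i * Y i - Fv i)) - ∑ j, a i j • (Y i - Y j)
    - (n : ℝ)⁻¹ • L1 i - ∑ j, a i j • (L2 i - L2 j)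

/-- Right-hand side of the `Z_i`-equation in algorithm (RRR-alg). -/
noncomputable def RRRrhsZ {n r q : ℕ}
    (a : Matrix (Fin n) (Fin n) ℝ)
    (L1 : Fin n → Matrix (Fin r) (Fin q) ℝ) (i : Fin n) :
    Matrix (Fin r) (Fin q) ℝ :=
  -∑ j, a i j • (L1 i - L1 j)

/-- Right-hand side of the `Λ¹_i`-equation in algorithm (RRR-alg), with the derivative
feedbacks replaced by the right-hand sides that determine them. -/
noncomputable def RRRrhsL1 {n r q : ℕ} {mdim pdim : Fin n → ℕ}
    (a : Matrix (Fin n) (Fin n) ℝ)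
    (Av : ∀ i, Matrix (Fin (mdim i)) (Fin r) ℝ)
    (Bv : ∀ i, Matrix (Fin (pdim i)) (Fin q) ℝ)
    (Fv : ∀ i, Matrix (Fin (mdim i)) (Fin q) ℝ)
    (Xl : ∀ i, Matrix (Fin r) (Fin (pdim i)) ℝ)
    (Y Z L1 L2 : Fin n → Matrix (Fin r) (Fin q) ℝ) (i : Fin n) :
    Matrix (Fin r) (Fin q) ℝ :=
  (n : ℝ)⁻¹ • (Y i + RRRrhsY a Av Fv Y L1 L2 i)
    - (Xl i + RRRrhsX Bv L1 i) * Bv i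
    + ∑ j, a i j • (Z i - Z j) - ∑ j, a i j • (L1 i - L1 j)

/-- Right-hand side of the `Λ²_i`-equation in algorithm (RRR-alg), with the derivative
feedbacks replaced by the right-hand sides that determine them. -/
noncomputable def RRRrhsL2 {n r q : ℕ} {mdim : Fin n → ℕ}
    (a : Matrix (Fin n) (Fin n) ℝ)
    (Av : ∀ i, Matrix (Fin (mdim i)) (Fin r) ℝ)
    (Fv : ∀ i, Matrix (Fin (mdim i)) (Fin q) ℝ)
    (Y L1 L2 : Fin n → Matrix (Fin r) (Fin q) ℝ) (i : Fin n) :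
    Matrix (Fin r) (Fin q) ℝ :=
  ∑ j, a i j • (Y i - Y j)
    + ∑ j, a i j • (RRRrhsY a Av Fv Y L1 L2 i - RRRrhsY a Av Fv Y L1 L2 j)

/-- Equilibrium of algorithm (RRR-alg): all right-hand sides vanish. -/
noncomputable def RRRequil {n r q : ℕ} {mdim pdim : Fin n → ℕ}
    (a : Matrix (Fin n) (Fin n) ℝ)
    (Av : ∀ i, Matrix (Fin (mdim i)) (Fin r) ℝ)
    (Bv : ∀ i, Matrix (Fin (pdim i)) (Fin q) ℝ)
    (Fv : ∀ i, Matrix (Fin (mdim i)) (Fin q) ℝ)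
    (Xl : ∀ i, Matrix (Fin r) (Fin (pdim i)) ℝ)
    (Y Z L1 L2 : Fin n → Matrix (Fin r) (Fin q) ℝ) : Prop :=
  ∀ i, RRRrhsX Bv L1 i = 0 ∧ RRRrhsY a Av Fv Y L1 L2 i = 0 ∧
    RRRrhsZ a L1 i = 0 ∧ RRRrhsL1 a Av Bv Fv Xl Y Z L1 L2 i = 0 ∧
    RRRrhsL2 a Av Fv Y L1 L2 i = 0


section AuxLap
open Finset
variable {n : ℕ} (a : Matrix (Fin n) (Fin n) ℝ)

private noncomputable def lapL : (Fin n → ℝ) →ₗ[ℝ] (Fin n → ℝ) where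
  toFun y := fun i => ∑ j, a i j * (y i - y j)
  map_add' x y := by
    funext i
    show ∑ j, a i j * ((x+y) i - (x+y) j) = (∑ j, a i j * (x i - x j)) + ∑ j, a i j * (y i - y j)
    rw [← Finset.sum_add_distrib]
    exact Finset.sum_congr rfl fun j _ => by simp only [Pi.add_apply]; ring
  map_smul' c y := by
    funext i
    show ∑ j, a i j * ((c • y) i - (c • y) j) = c * ∑ j, a i j * (y i - y j)
    rw [Finset.mul_sum]
    exact Finset.sum_congr rfl fun j _ => by simp only [Pi.smul_apply, smul_eq_mul]; ring

private noncomputable def sumL (n : ℕ) : (Fin n → ℝ) →ₗ[ℝ] ℝ where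
  toFun y := ∑ i, y i
  map_add' x y := by simp [Finset.sum_add_distrib]
  map_smul' c y := by simp [Finset.mul_sum]

lemma lap_const (hsym : ∀ i j, a i j = a j i) (hnonneg : ∀ i j, 0 ≤ a i j)
    (hconn : ∀ i j : Fin n, Relation.ReflTransGen (fun u v : Fin n => u ≠ v ∧ 0 < a u v) i j)
    (y : Fin n → ℝ) (hy : ∀ i, ∑ j, a i j * (y i - y j) = 0) : ∀ i j, y i = y j := by
  have hA : ∑ i, ∑ j, a i j * (y i * (y i - y j)) = 0 := by
    refine Finset.sum_eq_zero fun i _ => ?_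
    have : ∑ j, a i j * (y i * (y i - y j)) = y i * ∑ j, a i j * (y i - y j) := by
      rw [Finset.mul_sum]; exact Finset.sum_congr rfl fun j _ => by ring
    rw [this, hy i, mul_zero]
  have hB : ∑ i, ∑ j, a i j * (y j * (y j - y i)) = 0 := by
    rw [Finset.sum_comm]
    rw [← hA]
    exact Finset.sum_congr rfl fun j _ => Finset.sum_congr rfl fun i _ => by rw [hsym i j]
  have h0 : ∑ i, ∑ j, a i j * (y i - y j) ^ 2 = 0 := by
    have he : ∀ i ∈ Finset.univ, ∑ j, a i j * (y i - y j) ^ 2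
        = ∑ j, (a i j * (y i * (y i - y j)) + a i j * (y j * (y j - y i))) := by
      intro i _
      exact Finset.sum_congr rfl fun j _ => by ring
    rw [Finset.sum_congr rfl he]
    simp only [Finset.sum_add_distrib]
    rw [hA, hB, add_zero]
  have key : ∀ i j, 0 < a i j → y i = y j := by
    intro i j hij
    have hterm : ∀ i ∈ Finset.univ, (0:ℝ) ≤ ∑ j, a i j * (y i - y j) ^ 2 := by
      intro i _
      exact Finset.sum_nonneg fun j _ => mul_nonneg (hnonneg i j) (sq_nonneg _)
    have h1 := (Finset.sum_eq_zero_iff_of_nonneg hterm).1 h0 i (Finset.mem_univ i)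
    have h2 := (Finset.sum_eq_zero_iff_of_nonneg (fun j _ =>
      mul_nonneg (hnonneg i j) (sq_nonneg (y i - y j)))).1 h1 j (Finset.mem_univ j)
    have : (y i - y j) ^ 2 = 0 := by
      rcases mul_eq_zero.1 h2 with h | h
      · exact absurd h (ne_of_gt hij)
      · exact h
    have := pow_eq_zero_iff (n := 2) (by norm_num) |>.1 this
    linarith [sub_eq_zero.1 this]
  intro i j
  induction hconn i j with
  | refl => rfl
  | tail _ h ih => exact ih.trans (key _ _ h.2)

lemma lap_surjective (hn : 0 < n) (hsym : ∀ i j, a i j = a j i) (hnonneg : ∀ i j, 0 ≤ a i j)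
    (hconn : ∀ i j : Fin n, Relation.ReflTransGen (fun u v : Fin n => u ≠ v ∧ 0 < a u v) i j)
    (h : Fin n → ℝ) (hsum : ∑ i, h i = 0) :
    ∃ z : Fin n → ℝ, ∀ i, ∑ j, a i j * (z i - z j) = h i := by
  classical
  set i₀ : Fin n := ⟨0, hn⟩
  have hker : LinearMap.ker (lapL a) = Submodule.span ℝ {(fun _ => 1 : Fin n → ℝ)} := by
    apply le_antisymm
    · intro y hy
      have hy' : ∀ i, ∑ j, a i j * (y i - y j) = 0 := fun i => congrFun hy i
      have hc := lap_const a hsym hnonneg hconn y hy'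
      rw [Submodule.mem_span_singleton]
      exact ⟨y i₀, by funext i; simp [hc i i₀]⟩
    · rw [Submodule.span_le, Set.singleton_subset_iff]
      show (fun _ => (1:ℝ)) ∈ LinearMap.ker (lapL a)
      rw [LinearMap.mem_ker]
      funext i
      show ∑ j, a i j * ((1:ℝ) - 1) = 0
      simp
  have hrange_le : LinearMap.range (lapL a) ≤ LinearMap.ker (sumL n) := by
    rintro _ ⟨y, rfl⟩
    show ∑ i, ∑ j, a i j * (y i - y j) = 0
    have hsplit : ∑ i, ∑ j, a i j * (y i - y j)
        = (∑ i, ∑ j, a i j * y i) - ∑ i, ∑ j, a i j * y j := by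
      rw [← Finset.sum_sub_distrib]
      exact Finset.sum_congr rfl fun i _ => by
        rw [← Finset.sum_sub_distrib]
        exact Finset.sum_congr rfl fun j _ => by ring
    rw [hsplit, sub_eq_zero, Finset.sum_comm]
    exact Finset.sum_congr rfl fun i _ => Finset.sum_congr rfl fun j _ => by rw [hsym i j]
  have hone : (fun _ => (1:ℝ) : Fin n → ℝ) ≠ 0 := by
    intro hcontra
    have := congrFun hcontra i₀
    norm_num at this
  have hker_rank : Module.finrank ℝ (LinearMap.ker (lapL a)) = 1 := by
    rw [hker]; exact finrank_span_singleton hone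
  have hpi : Module.finrank ℝ (Fin n → ℝ) = n := by
    simp [Module.finrank_pi]
  have hrange_rank : Module.finrank ℝ (LinearMap.range (lapL a)) = n - 1 := by
    have := LinearMap.finrank_range_add_finrank_ker (lapL a)
    rw [hker_rank, hpi] at this
    omega
  have hsum_surj : LinearMap.range (sumL n) = ⊤ := by
    rw [LinearMap.range_eq_top]
    intro r
    exact ⟨Pi.single i₀ r, by simp [sumL]⟩
  have hsumker_rank : Module.finrank ℝ (LinearMap.ker (sumL n)) = n - 1 := by
    have := LinearMap.finrank_range_add_finrank_ker (sumL n)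
    rw [hsum_surj, hpi] at this
    rw [finrank_top] at this; simp at this
    omega
  have heq : LinearMap.range (lapL a) = LinearMap.ker (sumL n) := by
    apply Submodule.eq_of_le_of_finrank_le hrange_le
    rw [hrange_rank, hsumker_rank]
  have hh : h ∈ LinearMap.range (lapL a) := by
    rw [heq]; exact hsum
  obtain ⟨z, hz⟩ := hh
  exact ⟨z, fun i => congrFun hz i⟩

end AuxLap

section AuxFrob
variable {α β γ : Type*} [Fintype α] [Fintype β] [Fintype γ]

lemma frobInner_comm (M N : Matrix α β ℝ) : frobInner M N = frobInner N M := by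
  unfold frobInner
  rw [← Matrix.trace_transpose (Mᵀ * N), Matrix.transpose_mul, Matrix.transpose_transpose]

lemma frobSq_eq_sum (M : Matrix α β ℝ) : frobSq M = ∑ j, ∑ i, (M i j) ^ 2 := by
  unfold frobSq Matrix.trace
  simp [Matrix.mul_apply, Matrix.diag, sq]

lemma frobSq_nonneg (M : Matrix α β ℝ) : 0 ≤ frobSq M := by
  rw [frobSq_eq_sum]
  exact Finset.sum_nonneg fun j _ => Finset.sum_nonneg fun i _ => sq_nonneg _

lemma frobSq_eq_zero {M : Matrix α β ℝ} (h : frobSq M = 0) : M = 0 := by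
  rw [frobSq_eq_sum] at h
  ext i j
  have h1 := (Finset.sum_eq_zero_iff_of_nonneg (fun j _ =>
    Finset.sum_nonneg fun i _ => sq_nonneg (M i j))).1 h j (Finset.mem_univ j)
  have h2 := (Finset.sum_eq_zero_iff_of_nonneg (fun i _ => sq_nonneg (M i j))).1 h1 i
    (Finset.mem_univ i)
  simpa using pow_eq_zero_iff (n := 2) (by norm_num) |>.1 h2

lemma frobInner_sub_right (M N P : Matrix α β ℝ) :
    frobInner M (N - P) = frobInner M N - frobInner M P := by
  unfold frobInner; rw [Matrix.mul_sub, Matrix.trace_sub]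

lemma frobInner_smul_right (M N : Matrix α β ℝ) (c : ℝ) :
    frobInner M (c • N) = c * frobInner M N := by
  unfold frobInner; rw [Matrix.mul_smul, Matrix.trace_smul]; rfl

lemma frobInner_neg_right (M N : Matrix α β ℝ) : frobInner M (-N) = -frobInner M N := by
  unfold frobInner; rw [Matrix.mul_neg, Matrix.trace_neg]

lemma frobInner_zero_right (M : Matrix α β ℝ) : frobInner M (0 : Matrix α β ℝ) = 0 := by
  unfold frobInner; rw [Matrix.mul_zero, Matrix.trace_zero]

lemma frobInner_sum_right {ι : Type*} (s : Finset ι) (M : Matrix α β ℝ)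
    (N : ι → Matrix α β ℝ) : frobInner M (∑ j ∈ s, N j) = ∑ j ∈ s, frobInner M (N j) := by
  unfold frobInner; rw [Matrix.mul_sum, Matrix.trace_sum]

lemma frobInner_mul_right (M : Matrix α γ ℝ) (B : Matrix γ β ℝ) (N : Matrix α β ℝ) :
    frobInner (M * B) N = frobInner M (N * Bᵀ) := by
  unfold frobInner
  rw [Matrix.transpose_mul, Matrix.mul_assoc, Matrix.trace_mul_comm, Matrix.mul_assoc]

lemma frobInner_mul_left (A : Matrix α γ ℝ) (M : Matrix γ β ℝ) (N : Matrix α β ℝ) :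
    frobInner (A * M) N = frobInner M (Aᵀ * N) := by
  unfold frobInner
  rw [Matrix.transpose_mul, Matrix.mul_assoc]

lemma frobSq_add_smul (E P : Matrix α β ℝ) (t : ℝ) :
    frobSq (E + t • P) = frobSq E + 2 * t * frobInner E P + t ^ 2 * frobSq P := by
  unfold frobSq frobInner
  have key : Matrix.trace (Pᵀ * E) = Matrix.trace (Eᵀ * P) := by
    rw [← Matrix.trace_transpose (Eᵀ * P), Matrix.transpose_mul, Matrix.transpose_transpose]
  simp only [Matrix.transpose_add, Matrix.transpose_smul, Matrix.add_mul, Matrix.mul_add,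
    Matrix.smul_mul, Matrix.mul_smul, smul_smul, Matrix.trace_add, Matrix.trace_smul, key]
  simp only [smul_eq_mul]
  ring

end AuxFrob

section AuxMat
variable {n r q : ℕ} (a : Matrix (Fin n) (Fin n) ℝ)

lemma sum_lap_antisym (hsym : ∀ i j, a i j = a j i) (M : Fin n → Matrix (Fin r) (Fin q) ℝ) :
    ∑ i, ∑ j, a i j • (M i - M j) = 0 := by
  have hsplit : ∑ i, ∑ j, a i j • (M i - M j)
      = (∑ i, ∑ j, a i j • M i) - ∑ i, ∑ j, a i j • M j := by
    rw [← Finset.sum_sub_distrib]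
    exact Finset.sum_congr rfl fun i _ => by
      rw [← Finset.sum_sub_distrib]
      exact Finset.sum_congr rfl fun j _ => smul_sub _ _ _
  rw [hsplit, sub_eq_zero, Finset.sum_comm]
  exact Finset.sum_congr rfl fun i _ => Finset.sum_congr rfl fun j _ => by rw [hsym i j]

lemma matLap_const (hsym : ∀ i j, a i j = a j i) (hnonneg : ∀ i j, 0 ≤ a i j)
    (hconn : ∀ i j : Fin n, Relation.ReflTransGen (fun u v : Fin n => u ≠ v ∧ 0 < a u v) i j)
    (M : Fin n → Matrix (Fin r) (Fin q) ℝ)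
    (hM : ∀ i, ∑ j, a i j • (M i - M j) = 0) : ∀ i j, M i = M j := by
  intro i j
  ext k l
  refine lap_const a hsym hnonneg hconn (fun i' => M i' k l) (fun i' => ?_) i j
  have h := Matrix.ext_iff.2 (hM i') k l
  simpa [Matrix.sum_apply, Matrix.sub_apply, Matrix.smul_apply, smul_eq_mul] using h

lemma matLap_surj (hn : 0 < n) (hsym : ∀ i j, a i j = a j i) (hnonneg : ∀ i j, 0 ≤ a i j)
    (hconn : ∀ i j : Fin n, Relation.ReflTransGen (fun u v : Fin n => u ≠ v ∧ 0 < a u v) i j)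
    (H : Fin n → Matrix (Fin r) (Fin q) ℝ) (hs : ∑ i, H i = 0) :
    ∃ Z : Fin n → Matrix (Fin r) (Fin q) ℝ, ∀ i, ∑ j, a i j • (Z i - Z j) = H i := by
  have key : ∀ (k : Fin r) (l : Fin q), ∃ z : Fin n → ℝ,
      ∀ i, ∑ j, a i j * (z i - z j) = H i k l := by
    intro k l
    refine lap_surjective a hn hsym hnonneg hconn _ ?_
    have h := Matrix.ext_iff.2 hs k l
    simpa [Matrix.sum_apply] using h
  choose z hz using key
  refine ⟨fun i => Matrix.of fun k l => z k l i, fun i => ?_⟩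
  ext k l
  have h := hz k l i
  simpa [Matrix.sum_apply, Matrix.sub_apply, Matrix.smul_apply, smul_eq_mul,
    Matrix.of_apply] using h

end AuxMat

lemma sum_inv_smul {n : ℕ} (hn : 0 < n) {V : Type*} [AddCommGroup V] [Module ℝ V] (x : V) :
    ∑ _i : Fin n, (n:ℝ)⁻¹ • x = x := by
  rw [Finset.sum_const, Finset.card_univ, Fintype.card_fin, ← Nat.cast_smul_eq_nsmul ℝ,
    smul_smul, mul_inv_cancel₀ (Nat.cast_ne_zero.mpr hn.ne'), one_smul]

lemma quad_zero {s c : ℝ} (hc : 0 ≤ c) (h : ∀ t : ℝ, 0 ≤ 2*t*s + t^2*c) : s = 0 := by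
  by_contra hs
  have hc1 : (0:ℝ) < c + 1 := by linarith
  have h1 := h (-s / (c+1))
  have key : 2*(-s/(c+1))*s + (-s/(c+1))^2*c = (-(s^2)*(c+2))/(c+1)^2 := by
    field_simp; ring
  rw [key] at h1
  have h2 : 0 ≤ -(s^2)*(c+2) := by
    have hpos : (0:ℝ) < (c+1)^2 := by positivity
    calc (0:ℝ) = 0 * (c+1)^2 := by ring
    _ ≤ (-(s^2)*(c+2))/(c+1)^2 * (c+1)^2 := by
        apply mul_le_mul_of_nonneg_right _ hpos.le
        simpa using h1
    _ = -(s^2)*(c+2) := by field_simp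
  have hs2 : 0 < s^2 := by positivity
  nlinarith

lemma shift_cancel {V : Type*} [AddCommGroup V] (u x S d1 d2 : V) (h : u - x + S = 0) :
    (u + d1) - (x + d2) + (S + (d2 - d1)) = 0 := by
  calc (u + d1) - (x + d2) + (S + (d2 - d1)) = u - x + S := by abel
  _ = 0 := h

lemma shift_cancel' {V : Type*} [AddCommGroup V] (u x S d1 : V) (h : u - x + S = 0) :
    (u + d1) - x + (S + (0 - d1)) = 0 := by
  calc (u + d1) - x + (S + (0 - d1)) = u - x + S := by abel
  _ = 0 := h

lemma obj_expand {n r q : ℕ} {mdim : Fin n → ℕ}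
    (Av : ∀ i, Matrix (Fin (mdim i)) (Fin r) ℝ)
    (Fv : ∀ i, Matrix (Fin (mdim i)) (Fin q) ℝ)
    (Y : Fin n → Matrix (Fin r) (Fin q) ℝ) (D : Matrix (Fin r) (Fin q) ℝ) (t : ℝ) :
    RRRobj Av Fv (fun j => Y j + t • D)
      = RRRobj Av Fv Y + 2*t*(∑ j, frobInner (Av j * Y j - Fv j) (Av j * D))
        + t^2 * ∑ j, frobSq (Av j * D) := by
  unfold RRRobj
  have h : ∀ j ∈ Finset.univ, frobSq (Av j * (Y j + t • D) - Fv j)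
      = frobSq (Av j * Y j - Fv j) + 2 * t * frobInner (Av j * Y j - Fv j) (Av j * D)
        + t ^ 2 * frobSq (Av j * D) := by
    intro j _
    have he : Av j * (Y j + t • D) - Fv j = (Av j * Y j - Fv j) + t • (Av j * D) := by
      rw [Matrix.mul_add, Matrix.mul_smul]; abel
    rw [he, frobSq_add_smul]
  rw [Finset.sum_congr rfl h]
  rw [Finset.sum_add_distrib, Finset.sum_add_distrib, ← Finset.mul_sum, ← Finset.mul_sum]


theorem stmt_8 (n r q : ℕ) (hn : 0 < n) (mdim pdim : Fin n → ℕ)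
    (a : Matrix (Fin n) (Fin n) ℝ)
    (hsym : ∀ i j, a i j = a j i) (hnonneg : ∀ i j, 0 ≤ a i j)
    (hdiag : ∀ i, a i i = 0) (hconn : GraphConnected a)
    (Av : ∀ i, Matrix (Fin (mdim i)) (Fin r) ℝ)
    (Bv : ∀ i, Matrix (Fin (pdim i)) (Fin q) ℝ)
    (Fv : ∀ i, Matrix (Fin (mdim i)) (Fin q) ℝ)
    (Xl : ∀ i, Matrix (Fin r) (Fin (pdim i)) ℝ)
    (Y Z : Fin n → Matrix (Fin r) (Fin q) ℝ) :
    (RRRfeas a Bv Xl Y Z ∧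
        ∀ Xl' : ∀ i, Matrix (Fin r) (Fin (pdim i)) ℝ,
          ∀ Y' Z' : Fin n → Matrix (Fin r) (Fin q) ℝ,
            RRRfeas a Bv Xl' Y' Z' → RRRobj Av Fv Y ≤ RRRobj Av Fv Y') ↔
      (∃ L1 L2 : Fin n → Matrix (Fin r) (Fin q) ℝ,
        RRRequil a Av Bv Fv Xl Y Z L1 L2) := by
  classical
  have hn0 : (n:ℝ) ≠ 0 := Nat.cast_ne_zero.mpr hn.ne'
  set i₀ : Fin n := ⟨0, hn⟩ with hi₀
  constructor
  · -- optimality → equilibrium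
    rintro ⟨⟨hc, hYc⟩, hopt⟩
    set Gfun : Fin n → Matrix (Fin r) (Fin q) ℝ
      := fun i => (Av i)ᵀ * (Av i * Y i - Fv i) with hGfun
    have hGfun_eq : ∀ i, (Av i)ᵀ * (Av i * Y i - Fv i) = Gfun i := fun i => rfl
    set G : Matrix (Fin r) (Fin q) ℝ := ∑ i, Gfun i with hG
    have hGB : ∀ i, G * (Bv i)ᵀ = 0 := by
      intro i
      set M : Matrix (Fin r) (Fin (pdim i)) ℝ := G * (Bv i)ᵀ with hM
      set s : ℝ := ∑ j, frobInner (Av j * Y j - Fv j) (Av j * (M * Bv i)) with hs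
      set c : ℝ := ∑ j, frobSq (Av j * (M * Bv i)) with hcdef
      have hcnn : 0 ≤ c := Finset.sum_nonneg fun j _ => frobSq_nonneg _
      have hvar : ∀ t : ℝ, 0 ≤ 2*t*s + t^2*c := by
        intro t
        obtain ⟨dZ, hdZ⟩ := matLap_surj a hn hsym hnonneg hconn
          (fun j => (if j = i then t • (M * Bv i) else 0) - (n:ℝ)⁻¹ • (t • (M * Bv i)))
          (by
            rw [Finset.sum_sub_distrib, Finset.sum_ite_eq' Finset.univ i
              (fun _ => t • (M * Bv i)), sum_inv_smul hn]
            simp)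
        have hfe : RRRfeas a Bv (Function.update Xl i (Xl i + t • M))
            (fun j => Y j + t • (M * Bv i)) (fun j => Z j + dZ j) := by
          constructor
          · intro j
            dsimp only
            have hsplitZ : ∑ k, a j k • ((Z j + dZ j) - (Z k + dZ k))
                = (∑ k, a j k • (Z j - Z k)) + ∑ k, a j k • (dZ j - dZ k) := by
              rw [← Finset.sum_add_distrib]
              exact Finset.sum_congr rfl fun k _ => by rw [← smul_add]; congr 1; abel
            rw [hsplitZ, hdZ j, smul_add]
            by_cases hji : j = i
            · subst hji
              rw [Function.update_self, if_pos rfl, Matrix.add_mul, Matrix.smul_mul]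
              exact shift_cancel _ _ _ _ _ (hc j)
            · rw [Function.update_of_ne hji, if_neg hji]
              exact shift_cancel' _ _ _ _ (hc j)
          · intro j k
            dsimp only
            rw [hYc j k]
        have hle := hopt _ _ _ hfe
        rw [obj_expand Av Fv Y (M * Bv i) t] at hle
        rw [← hs, ← hcdef] at hle
        linarith
      have hs0 : s = 0 := quad_zero hcnn hvar
      have hsid : s = frobSq M := by
        rw [hs]
        have h1 : ∀ j ∈ Finset.univ, frobInner (Av j * Y j - Fv j) (Av j * (M * Bv i))
            = frobInner (M * Bv i) (Gfun j) := by
          intro j _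
          rw [frobInner_comm, frobInner_mul_left, hGfun_eq j]
        rw [Finset.sum_congr rfl h1, ← frobInner_sum_right, ← hG,
          frobInner_mul_right, ← hM]
        rfl
      rw [hsid] at hs0
      exact frobSq_eq_zero hs0
    have hLapY : ∀ i, ∑ j, a i j • (Y i - Y j) = 0 := fun i =>
      Finset.sum_eq_zero fun j _ => by rw [hYc i j, sub_self, smul_zero]
    obtain ⟨L2, hL2⟩ := matLap_surj a hn hsym hnonneg hconn
      (fun i => (n:ℝ)⁻¹ • G - Gfun i)
      (by rw [Finset.sum_sub_distrib, sum_inv_smul hn, ← hG, sub_self])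
    have hL2' : ∀ i, ∑ j, a i j • (L2 i - L2 j) = (n:ℝ)⁻¹ • G - Gfun i := fun i => hL2 i
    refine ⟨fun _ => -G, L2, ?_⟩
    have hrhsX : ∀ i, RRRrhsX Bv (fun _ => -G) i = 0 := by
      intro i
      unfold RRRrhsX
      rw [Matrix.neg_mul, hGB i, neg_zero]
    have hrhsY : ∀ i, RRRrhsY a Av Fv Y (fun _ => -G) L2 i = 0 := by
      intro i
      unfold RRRrhsY
      dsimp only
      rw [hLapY i, hL2' i, hGfun_eq i]
      module
    have hrhsZ : ∀ i, RRRrhsZ a (fun _ => -G) i = 0 := by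
      intro i
      unfold RRRrhsZ
      simp
    have hrhsL1 : ∀ i, RRRrhsL1 a Av Bv Fv Xl Y Z (fun _ => -G) L2 i = 0 := by
      intro i
      unfold RRRrhsL1
      rw [hrhsY i, hrhsX i]
      have hz : ∑ j, a i j • ((fun _ => -G : Fin n → Matrix (Fin r) (Fin q) ℝ) i
          - (fun _ => -G : Fin n → Matrix (Fin r) (Fin q) ℝ) j) = 0 := by simp
      rw [hz, sub_zero, add_zero, add_zero]
      exact hc i
    have hrhsL2 : ∀ i, RRRrhsL2 a Av Fv Y (fun _ => -G) L2 i = 0 := by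
      intro i
      unfold RRRrhsL2
      rw [hLapY i]
      simp only [hrhsY, sub_self, smul_zero, Finset.sum_const_zero, add_zero]
    exact fun i => ⟨hrhsX i, hrhsY i, hrhsZ i, hrhsL1 i, hrhsL2 i⟩
  · -- equilibrium → optimality
    rintro ⟨L1, L2, hEq⟩
    have hX : ∀ i, L1 i * (Bv i)ᵀ = 0 := fun i => (hEq i).1
    have hY0 : ∀ i, RRRrhsY a Av Fv Y L1 L2 i = 0 := fun i => (hEq i).2.1
    have hZ0 : ∀ i, ∑ j, a i j • (L1 i - L1 j) = 0 := by
      intro i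
      have h := (hEq i).2.2.1
      unfold RRRrhsZ at h
      exact neg_eq_zero.mp h
    have hL1eq := fun i => (hEq i).2.2.2.1
    have hL2eq := fun i => (hEq i).2.2.2.2
    have hLapY : ∀ i, ∑ j, a i j • (Y i - Y j) = 0 := by
      intro i
      have h := hL2eq i
      unfold RRRrhsL2 at h
      simp only [hY0, sub_self, smul_zero, Finset.sum_const_zero, add_zero] at h
      exact h
    have hYc : ∀ i j, Y i = Y j := matLap_const a hsym hnonneg hconn Y hLapY
    have hL1c : ∀ i j, L1 i = L1 j := matLap_const a hsym hnonneg hconn L1 hZ0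
    have hc : ∀ i, (n:ℝ)⁻¹ • Y i - Xl i * Bv i + ∑ j, a i j • (Z i - Z j) = 0 := by
      intro i
      have h := hL1eq i
      unfold RRRrhsL1 at h
      rw [hY0 i] at h
      have hx : RRRrhsX Bv L1 i = 0 := (hEq i).1
      rw [hx, hZ0 i] at h
      rw [add_zero, add_zero, sub_zero] at h
      exact h
    refine ⟨⟨hc, hYc⟩, ?_⟩
    intro Xl' Y' Z' hfe'
    obtain ⟨hc', hYc'⟩ := hfe'
    set W : Matrix (Fin r) (Fin q) ℝ := Y' i₀ - Y i₀ with hW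
    have hWi : ∀ i, Y' i = Y i + W := by
      intro i
      rw [hW, hYc' i i₀, hYc i i₀]
      abel
    have hG : ∀ i, (Av i)ᵀ * (Av i * Y i - Fv i)
        = -((n:ℝ)⁻¹ • L1 i) - ∑ j, a i j • (L2 i - L2 j) := by
      intro i
      have h := hY0 i
      unfold RRRrhsY at h
      rw [hLapY i] at h
      have h2 : (Av i)ᵀ * (Av i * Y i - Fv i)
            - (-((n:ℝ)⁻¹ • L1 i) - ∑ j, a i j • (L2 i - L2 j))
          = -(-((Av i)ᵀ * (Av i * Y i - Fv i)) - 0 - (n:ℝ)⁻¹ • L1 i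
            - ∑ j, a i j • (L2 i - L2 j)) := by
        module
      rw [h, neg_zero] at h2
      exact sub_eq_zero.mp h2
    have hsumG : ∑ i, (Av i)ᵀ * (Av i * Y i - Fv i) = -(L1 i₀) := by
      rw [Finset.sum_congr rfl fun i (_ : i ∈ Finset.univ) => hG i, Finset.sum_sub_distrib,
        sum_lap_antisym a hsym L2, Finset.sum_neg_distrib]
      have h1 : ∑ i : Fin n, (n:ℝ)⁻¹ • L1 i = L1 i₀ := by
        rw [Finset.sum_congr rfl fun i (_ : i ∈ Finset.univ) => by rw [hL1c i i₀],
          sum_inv_smul hn]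
      rw [h1, sub_zero]
    have hdiff : ∀ i, (n:ℝ)⁻¹ • W
        = (Xl' i - Xl i) * Bv i - ∑ j, a i j • ((Z' i - Z i) - (Z' j - Z j)) := by
      intro i
      have h3 : ∑ j, a i j • ((Z' i - Z i) - (Z' j - Z j))
          = (∑ j, a i j • (Z' i - Z' j)) - ∑ j, a i j • (Z i - Z j) := by
        rw [← Finset.sum_sub_distrib]
        exact Finset.sum_congr rfl fun j _ => by rw [← smul_sub]; congr 1; abel
      have key : (n:ℝ)⁻¹ • W
            - ((Xl' i - Xl i) * Bv i - ∑ j, a i j • ((Z' i - Z i) - (Z' j - Z j)))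
          = ((n:ℝ)⁻¹ • Y' i - Xl' i * Bv i + ∑ j, a i j • (Z' i - Z' j))
            - ((n:ℝ)⁻¹ • Y i - Xl i * Bv i + ∑ j, a i j • (Z i - Z j)) := by
        rw [h3, Matrix.sub_mul, hWi i]
        module
      rw [hc' i, hc i, sub_zero] at key
      exact sub_eq_zero.mp key
    have hLW : frobInner (L1 i₀) W = 0 := by
      have hterm : ∀ i ∈ Finset.univ, frobInner (L1 i₀) ((n:ℝ)⁻¹ • W)
          = - frobInner (L1 i₀) (∑ j, a i j • ((Z' i - Z i) - (Z' j - Z j))) := by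
        intro i _
        rw [hdiff i, frobInner_sub_right]
        have hzero : frobInner (L1 i₀) ((Xl' i - Xl i) * Bv i) = 0 := by
          rw [frobInner_comm, frobInner_mul_right, hL1c i₀ i, hX i, frobInner_zero_right]
        rw [hzero, zero_sub]
      have hsl : ∑ _i : Fin n, frobInner (L1 i₀) ((n:ℝ)⁻¹ • W) = frobInner (L1 i₀) W := by
        rw [frobInner_smul_right, Finset.sum_const, Finset.card_univ, Fintype.card_fin,
          nsmul_eq_mul]
        field_simp
      rw [← hsl, Finset.sum_congr rfl hterm, Finset.sum_neg_distrib, ← frobInner_sum_right,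
        sum_lap_antisym a hsym (fun i => Z' i - Z i), frobInner_zero_right, neg_zero]
    have hsfinal : ∑ j, frobInner (Av j * Y j - Fv j) (Av j * W) = 0 := by
      have h1 : ∀ j ∈ Finset.univ, frobInner (Av j * Y j - Fv j) (Av j * W)
          = frobInner W ((Av j)ᵀ * (Av j * Y j - Fv j)) := by
        intro j _
        rw [frobInner_comm, frobInner_mul_left]
      rw [Finset.sum_congr rfl h1, ← frobInner_sum_right, hsumG,
        frobInner_neg_right, frobInner_comm, hLW, neg_zero]
    have hYeq : Y' = fun j => Y j + (1:ℝ) • W := funext fun j => by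
      rw [one_smul]; exact hWi j
    rw [hYeq, obj_expand Av Fv Y W 1, hsfinal]
    have hnn : 0 ≤ ∑ j, frobSq (Av j * W) :=
      Finset.sum_nonneg fun j _ => frobSq_nonneg _
    nlinarith
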